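/- Let X be a κ-c.c. topological space and ⟨V_ζ : ζ < κ⟩ a decreasing sequence of open subsets of X. Then there exists ξ < κ such that cl(V_ζ) = cl(V_ξ) for all ζ with ξ ≤ ζ < κ. -/

import Mathlib

set_option autoImplicit false

open Cardinal Set

/-- if `X` is `κ`-c.c. (`κ` a regular infinite cardinal) and
`⟨V_ζ : ζ < κ⟩` is a decreasing sequence of open subsets of `X`, then there is `ξ < κ`
such that `cl(V_ζ) = cl(V_ξ)` for all `ξ ≤ ζ < κ`. -/
theorem closures_stabilize {X : Type*} [TopologicalSpace X]
    (κ : Cardinal) (hκ : κ.IsRegular)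
    (hcc : ∀ 𝒞 : Set (Set X), (∀ U ∈ 𝒞, IsOpen U ∧ U.Nonempty) →
      𝒞.PairwiseDisjoint id → #𝒞 < κ)
    (V : Ordinal → Set X)
    (hopen : ∀ ζ < κ.ord, IsOpen (V ζ))
    (hdec : ∀ ξ ζ : Ordinal, ξ ≤ ζ → ζ < κ.ord → V ζ ⊆ V ξ) :
    ∃ ξ < κ.ord, ∀ ζ : Ordinal, ξ ≤ ζ → ζ < κ.ord → closure (V ζ) = closure (V ξ) := by
  by_contra hcon
  push_neg at hcon
  have hlim := Cardinal.isSuccLimit_ord hκ.aleph0_le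
  have hclos : ∀ ξ ζ : Ordinal, ξ ≤ ζ → ζ < κ.ord → closure (V ζ) ⊆ closure (V ξ) :=
    fun ξ ζ h1 h2 => closure_mono (hdec ξ ζ h1 h2)
  -- M : set of ordinals where the closure takes a "new" (strictly smaller) value
  set M : Set Ordinal := {ξ | ξ < κ.ord ∧ ∀ η < ξ, closure (V η) ≠ closure (V ξ)} with hM
  -- M is unbounded below κ.ord
  have hub : ∀ α < κ.ord, ∃ ξ ∈ M, α ≤ ξ := by
    intro α hα
    obtain ⟨ζ, hζ1, hζ2, hζ3⟩ := hcon α hα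
    set S : Set Ordinal := {ζ | α ≤ ζ ∧ ζ < κ.ord ∧ closure (V ζ) ≠ closure (V α)} with hS
    have hSne : S.Nonempty := ⟨ζ, hζ1, hζ2, hζ3⟩
    obtain ⟨h1, h2, h3⟩ := csInf_mem hSne
    refine ⟨sInf S, ⟨h2, ?_⟩, h1⟩
    intro η hη
    rcases le_or_gt α η with hαη | hηα
    · have hηS : η ∉ S := fun hc => absurd (csInf_le' hc) (not_le.mpr hη)
      have heq : closure (V η) = closure (V α) := by
        by_contra hne
        exact hηS ⟨hαη, hη.trans h2, hne⟩
      rw [heq]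
      exact fun hc => h3 hc.symm
    · intro hc
      apply h3
      refine subset_antisymm (hclos α (sInf S) h1 h2) ?_
      have h4 : closure (V α) ⊆ closure (V η) := hclos η α hηα.le hα
      rwa [hc] at h4
  -- next element of M above ξ
  set nxt : Ordinal → Ordinal := fun ξ => sInf {ζ | ζ ∈ M ∧ ξ < ζ} with hnxtdef
  have hnxt : ∀ ξ < κ.ord, nxt ξ ∈ M ∧ ξ < nxt ξ := by
    intro ξ hξ
    obtain ⟨ξ', hξ'M, hξ'⟩ := hub (Order.succ ξ) (hlim.succ_lt hξ)
    have hne : Set.Nonempty {ζ | ζ ∈ M ∧ ξ < ζ} := ⟨ξ', hξ'M, Order.succ_le_iff.mp hξ'⟩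
    exact csInf_mem hne
  have hmin : ∀ ξ ζ : Ordinal, ζ ∈ M → ξ < ζ → nxt ξ ≤ ζ :=
    fun ξ ζ h1 h2 => csInf_le' (show ζ ∈ {ζ | ζ ∈ M ∧ ξ < ζ} from ⟨h1, h2⟩)
  -- the disjoint open sets
  set U : Ordinal → Set X := fun ξ => V ξ \ closure (V (nxt ξ)) with hU
  have hUopen : ∀ ξ ∈ M, IsOpen (U ξ) := fun ξ hξ => (hopen ξ hξ.1).sdiff isClosed_closure
  have hUne : ∀ ξ ∈ M, (U ξ).Nonempty := by
    intro ξ hξ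
    by_contra hne
    rw [Set.not_nonempty_iff_eq_empty, Set.diff_eq_empty] at hne
    obtain ⟨⟨hnκ, hnM⟩, hlt⟩ := hnxt ξ hξ.1
    exact hnM ξ hlt (subset_antisymm (closure_minimal hne isClosed_closure)
      (hclos ξ (nxt ξ) hlt.le hnκ))
  have hdisj : ∀ ξ ∈ M, ∀ ξ' ∈ M, ξ < ξ' → Disjoint (U ξ) (U ξ') := by
    intro ξ hξ ξ' hξ' hlt
    rw [Set.disjoint_left]
    intro x hx hx'
    exact hx.2 (subset_closure (hdec (nxt ξ) ξ' (hmin ξ ξ' hξ' hlt) hξ'.1 hx'.1))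
  have hUinj : ∀ ξ ∈ M, ∀ ξ' ∈ M, U ξ = U ξ' → ξ = ξ' := by
    intro ξ hξ ξ' hξ' heq
    by_contra hne
    rcases lt_or_gt_of_ne hne with h | h
    · have := hdisj ξ hξ ξ' hξ' h
      rw [heq, disjoint_self] at this
      exact (hUne ξ' hξ').ne_empty this
    · have := hdisj ξ' hξ' ξ hξ h
      rw [heq, disjoint_self] at this
      exact (hUne ξ' hξ').ne_empty this
  set 𝒞 : Set (Set X) := U '' M with h𝒞
  have hcard : #𝒞 < κ := by
    apply hcc
    · rintro W ⟨ξ, hξ, rfl⟩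
      exact ⟨hUopen ξ hξ, hUne ξ hξ⟩
    · rintro W ⟨ξ, hξ, rfl⟩ W' ⟨ξ', hξ', rfl⟩ hne
      rcases lt_trichotomy ξ ξ' with h | h | h
      · exact hdisj ξ hξ ξ' hξ' h
      · exact absurd (congrArg U h) hne
      · exact (hdisj ξ' hξ' ξ hξ h).symm
  -- choose preimages
  have hchoice : ∀ W : 𝒞, ∃ ξ, ξ ∈ M ∧ U ξ = (W : Set X) := by
    rintro ⟨W, ξ, hξ, rfl⟩
    exact ⟨ξ, hξ, rfl⟩
  choose f hf1 hf2 using hchoice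
  have hflt : ∀ i, f i < κ.ord := fun i => (hf1 i).1
  have hsup : iSup f < κ.ord := iSup_lt_ord_of_isRegular hκ hcard hflt
  obtain ⟨ξ, hξM, hξge⟩ := hub (Order.succ (iSup f)) (hlim.succ_lt hsup)
  have hξκ := hξM.1
  have hmem : U ξ ∈ 𝒞 := Set.mem_image_of_mem U hξM
  have hfi : f ⟨U ξ, hmem⟩ = ξ := hUinj _ (hf1 _) ξ hξM (hf2 _)
  have hle : ξ ≤ iSup f := hfi ▸ Ordinal.le_iSup f ⟨U ξ, hmem⟩
  exact absurd (hle.trans_lt (Order.lt_succ _)) (not_lt.mpr hξge)
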